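/- S restricted to M⁰ attains its global maximum if and only if D = 0, b² ≠ 3ac, and R_s ≤ d_2T_2/(nT_p) < R_d, where R_d = (9ad − bc)/(2(b² − 3ac)) and R_s = (4abc − 9a²d − b³)/(a(b² − 3ac)). -/

import Mathlib

/-- If a cubic has a root `ξ` which is also a root of its derivative,
its discriminant vanishes. -/
theorem disc_zero_of_double (a b c d ξ : ℝ)
    (hP : a*ξ^3+b*ξ^2+c*ξ+d = 0) (hP' : 3*a*ξ^2+2*b*ξ+c = 0) :
    18*a*b*c*d - 4*b^3*d + b^2*c^2 - 4*a*c^3 - 27*a^2*d^2 = 0 := by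
  have hc2 : c = -(3*a*ξ^2) - 2*b*ξ := by linarith
  have hd2 : d = 2*a*ξ^3 + b*ξ^2 := by linear_combination hP - ξ*hP'
  rw [hc2, hd2]; ring

theorem deriv_root_of_disc (a b c d Rd : ℝ) (he : b^2 - 3*a*c ≠ 0)
    (hDisc : 18*a*b*c*d - 4*b^3*d + b^2*c^2 - 4*a*c^3 - 27*a^2*d^2 = 0)
    (hRd : Rd = (9*a*d - b*c) / (2*(b^2 - 3*a*c))) :
    3*a*Rd^2+2*b*Rd+c = 0 := by
  have key : (3*a*Rd^2+2*b*Rd+c) * (4*(b^2-3*a*c)^2)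
      = -9*a*(18*a*b*c*d - 4*b^3*d + b^2*c^2 - 4*a*c^3 - 27*a^2*d^2) := by
    rw [hRd]; field_simp; ring
  rw [hDisc] at key
  have h4 : (4*(b^2-3*a*c)^2) ≠ 0 := by positivity
  have key2 : (3*a*Rd^2+2*b*Rd+c) * (4*(b^2-3*a*c)^2) = 0 := by linarith
  exact (mul_eq_zero.mp key2).resolve_right h4

theorem root_of_disc (a b c d Rd : ℝ) (he : b^2 - 3*a*c ≠ 0)
    (hDisc : 18*a*b*c*d - 4*b^3*d + b^2*c^2 - 4*a*c^3 - 27*a^2*d^2 = 0)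
    (hRd : Rd = (9*a*d - b*c) / (2*(b^2 - 3*a*c))) :
    a*Rd^3+b*Rd^2+c*Rd+d = 0 := by
  have key : (a*Rd^3+b*Rd^2+c*Rd+d) * (8*(b^2-3*a*c)^3)
      = (-2*b^3+9*a*b*c-27*a^2*d)*(18*a*b*c*d - 4*b^3*d + b^2*c^2 - 4*a*c^3 - 27*a^2*d^2) := by
    rw [hRd]; field_simp [show b^2 - a*c*3 ≠ 0 by contrapose! he; linarith]; ring
  rw [hDisc] at key
  simp only [mul_zero] at key
  have h8 : (8*(b^2-3*a*c)^3) ≠ 0 := by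
    intro h; apply he
    have := pow_eq_zero_iff (n := 3) (by norm_num) |>.mp (by linarith : (b^2-3*a*c)^3 = 0)
    linarith
  exact (mul_eq_zero.mp key).resolve_right h8

theorem cubic_deriv_zero (a b c d x0 ξ : ℝ)
    (hpos : ∀ x, x0 < x → 0 ≤ a*x^3+b*x^2+c*x+d)
    (hξ : x0 < ξ) (hPξ : a*ξ^3+b*ξ^2+c*ξ+d = 0) :
    3*a*ξ^2+2*b*ξ+c = 0 := by
  have hderiv : HasDerivAt (fun x : ℝ => a*x^3+b*x^2+c*x+d) (3*a*ξ^2+2*b*ξ+c) ξ := by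
    have h3 : HasDerivAt (fun x : ℝ => a*x^3) (a*(3*ξ^2)) ξ := by
      simpa using (hasDerivAt_pow 3 ξ).const_mul a
    have h2 : HasDerivAt (fun x : ℝ => b*x^2) (b*(2*ξ)) ξ := by
      simpa using (hasDerivAt_pow 2 ξ).const_mul b
    have h1 : HasDerivAt (fun x : ℝ => c*x) c ξ := by
      simpa using (hasDerivAt_id ξ).const_mul c
    have := ((h3.add h2).add h1).add_const d
    rw [show 3*a*ξ^2+2*b*ξ+c = a*(3*ξ^2)+b*(2*ξ)+c by ring]
    exact this
  have hmin : IsLocalMin (fun x : ℝ => a*x^3+b*x^2+c*x+d) ξ := by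
    filter_upwards [isOpen_Ioi.mem_nhds (show ξ ∈ Set.Ioi x0 from hξ)] with x hx
    simpa [hPξ] using hpos x hx
  exact hmin.hasDerivAt_eq_zero hderiv

theorem cubic_max_iff (a b c d x0 Disc Rd Rs : ℝ) (ha : 0 < a)
    (hDisc : Disc = 18*a*b*c*d - 4*b^3*d + b^2*c^2 - 4*a*c^3 - 27*a^2*d^2)
    (hRd : Rd = (9*a*d - b*c) / (2*(b^2 - 3*a*c)))
    (hRs : Rs = (4*a*b*c - 9*a^2*d - b^3) / (a*(b^2 - 3*a*c))) :
    ((∀ x, x0 < x → 0 ≤ a*x^3+b*x^2+c*x+d) ∧ (∃ x, x0 < x ∧ a*x^3+b*x^2+c*x+d = 0))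
      ↔ (Disc = 0 ∧ b^2 ≠ 3*a*c ∧ Rs ≤ x0 ∧ x0 < Rd) := by
  have ha' : a ≠ 0 := ne_of_gt ha
  constructor
  · rintro ⟨hpos, ξ, hξ, hPξ⟩
    have hP'ξ : 3*a*ξ^2+2*b*ξ+c = 0 := cubic_deriv_zero a b c d x0 ξ hpos hξ hPξ
    have hc2 : c = -(3*a*ξ^2) - 2*b*ξ := by linarith
    have hd2 : d = 2*a*ξ^3 + b*ξ^2 := by linear_combination hPξ - ξ*hP'ξ
    have hfact : ∀ x : ℝ, a*x^3+b*x^2+c*x+d = a*(x-ξ)^2*(x - (-(b+2*a*ξ)/a)) := by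
      intro x
      rw [hc2, hd2]; field_simp; ring
    have hb3 : b + 3*a*ξ ≠ 0 := by
      intro h0
      have hy : x0 < (x0+ξ)/2 := by linarith
      have hP := hpos ((x0+ξ)/2) hy
      rw [hfact ((x0+ξ)/2)] at hP
      have hslt : -(b+2*a*ξ)/a = ξ := by
        rw [show b = -(3*a*ξ) by linarith]; field_simp; ring
      rw [hslt] at hP
      have hneg : (x0+ξ)/2 - ξ < 0 := by linarith
      have hnz : ((x0+ξ)/2 - ξ)^2 ≠ 0 := pow_ne_zero _ (ne_of_lt hneg)
      have h2pos : 0 < ((x0+ξ)/2 - ξ)^2 := lt_of_le_of_ne (sq_nonneg _) (Ne.symm hnz)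
      have : a * ((x0+ξ)/2 - ξ)^2 * ((x0+ξ)/2 - ξ) < 0 :=
        mul_neg_of_pos_of_neg (mul_pos ha h2pos) hneg
      linarith
    have hb3sq : 0 < (b + 3*a*ξ)^2 := by positivity
    have he : b^2 - 3*a*c = (b + 3*a*ξ)^2 := by rw [hc2]; ring
    have hene : b^2 ≠ 3*a*c := by
      intro h
      rw [h] at he; nlinarith
    have hRdξ : Rd = ξ := by
      have hnum : 9*a*d - b*c = ξ * (2*((b+3*a*ξ)^2)) := by rw [hc2, hd2]; ring
      rw [hRd, he, hnum]
      exact mul_div_cancel_right₀ ξ (by positivity)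
    have hRss : Rs = -(b+2*a*ξ)/a := by
      have hnum : 4*a*b*c - 9*a^2*d - b^3 = (-(b+2*a*ξ))*(b+3*a*ξ)^2 := by
        rw [hc2, hd2]; ring
      rw [hRs, he, hnum]
      rw [div_eq_div_iff (by positivity) ha']
      ring
    refine ⟨by rw [hDisc, hc2, hd2]; ring, hene, ?_, hRdξ ▸ hξ⟩
    -- Rs ≤ x0
    by_contra hlt
    push_neg at hlt
    have key : ∀ y, x0 < y → y < Rs → y ≠ ξ → False := by
      intro y hy1 hy2 hy3
      have hP := hpos y hy1
      rw [hfact y, ← hRss] at hP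
      have hnz : (y - ξ)^2 ≠ 0 := pow_ne_zero _ (sub_ne_zero.mpr hy3)
      have h2pos : 0 < (y - ξ)^2 := lt_of_le_of_ne (sq_nonneg _) (Ne.symm hnz)
      have : a * (y - ξ)^2 * (y - Rs) < 0 :=
        mul_neg_of_pos_of_neg (mul_pos ha h2pos) (by linarith)
      linarith
    by_cases hcase : (x0 + Rs)/2 = ξ
    · exact key ((x0 + (x0 + Rs)/2)/2) (by linarith) (by linarith)
        (by rw [← hcase]; intro h; linarith [hcase ▸ h])
    · exact key ((x0 + Rs)/2) (by linarith) (by linarith) hcase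
  · rintro ⟨hD0, hene, hRsx, hxRd⟩
    have he0 : b^2 - 3*a*c ≠ 0 := sub_ne_zero.mpr hene
    rw [hDisc] at hD0
    have hP'd := deriv_root_of_disc a b c d Rd he0 hD0 hRd
    have hPd := root_of_disc a b c d Rd he0 hD0 hRd
    have hsum : Rs = -(b+2*a*Rd)/a := by
      rw [hRs, hRd]
      rw [div_eq_div_iff (by exact mul_ne_zero ha' he0) ha']
      field_simp [show b^2 - a*c*3 ≠ 0 by contrapose! he0; linarith]
      ring
    have hc2 : c = -(3*a*Rd^2) - 2*b*Rd := by linarith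
    have hd2 : d = 2*a*Rd^3 + b*Rd^2 := by linear_combination hPd - Rd*hP'd
    have hfact : ∀ x : ℝ, a*x^3+b*x^2+c*x+d = a*(x-Rd)^2*(x-Rs) := by
      intro x
      rw [hc2, hd2, hsum]; field_simp; ring
    refine ⟨fun x hx => ?_, Rd, hxRd, hPd⟩
    rw [hfact x]
    exact mul_nonneg (mul_nonneg ha.le (sq_nonneg _)) (by linarith)

set_option maxHeartbeats 4000000 in
theorem key_identity (d₁ d₂ : ℕ) (hd₁ : 0 < d₁) (hd₂ : 0 < d₂)
    (κ₁ κ₂ : ℝ)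
    (n : ℝ) (hn : n = 2 * ((d₁ : ℝ) * (1 - κ₁) + (d₂ : ℝ) * (1 - κ₂)))
    (Tp T₁ T₂ : ℝ) (hTp : 0 < Tp) (hT₁ : 0 < T₁) (hT₂ : 0 < T₂)
    (a b c d : ℝ)
    (ha : a = n * (d₂ : ℝ) * (1 - κ₂) * Tp)
    (hb : b = (d₁ : ℝ)^2 * (1 - κ₁) * T₁ - (d₂ : ℝ)^2 * (1 - κ₂) * T₂ + 2 * n^2 * Tp
        - n^2 * κ₁ * Tp^2 / T₁)
    (hc : c = -(2 * n * (d₂ : ℝ) * T₂) + 2 * n * (d₂ : ℝ) * κ₁ * Tp * T₂ / T₁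
        - n * (d₂ : ℝ) * κ₂ * Tp)
    (hd : d = -((d₂ : ℝ)^2 * κ₁ * T₂^2 / T₁) + κ₂ * (d₂ : ℝ)^2 * T₂)
    (β α₁ α₂ : ℝ) (hβ : 0 < β) (hα₁ : 0 < α₁) (hα₂ : 0 < α₂)
    (hFq : -n * Tp / β + (d₁ : ℝ) * T₁ / α₁ + (d₂ : ℝ) * T₂ / α₂ = 0) :
    -(1/4) * ((d₁ : ℝ) * (1 - κ₁) * α₁ + (d₂ : ℝ) * (1 - κ₂) * α₂) / β^2
        - n / (2 * β) + (1/4) * ((d₁ : ℝ) * κ₁ / α₁ + (d₂ : ℝ) * κ₂ / α₂)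
      = -(α₁/(4*(d₁:ℝ)*T₁*α₂^2))
          * (a*(α₂/β)^3 + b*(α₂/β)^2 + c*(α₂/β) + d) := by
  have hd₁' : (0:ℝ) < (d₁:ℝ) := by exact_mod_cast hd₁
  have hd₂' : (0:ℝ) < (d₂:ℝ) := by exact_mod_cast hd₂
  have hT1eq : T₁ = α₁ * (n*Tp*α₂ - (d₂:ℝ)*T₂*β) / ((d₁:ℝ)*β*α₂) := by
    field_simp at hFq ⊢
    linarith
  have hkey : 0 < n*Tp*α₂ - (d₂:ℝ)*T₂*β := by
    have h1 : T₁ * ((d₁:ℝ)*β*α₂) = α₁ * (n*Tp*α₂ - (d₂:ℝ)*T₂*β) := by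
      rw [hT1eq]; field_simp
    nlinarith [mul_pos hT₁ (mul_pos (mul_pos hd₁' hβ) hα₂)]
  have hne : n*Tp*α₂ - (d₂:ℝ)*T₂*β ≠ 0 := ne_of_gt hkey
  have hβ' := ne_of_gt hβ
  have hα₁' := ne_of_gt hα₁
  have hα₂' := ne_of_gt hα₂
  have hd₁'' := ne_of_gt hd₁'
  rw [ha, hb, hc, hd, hT1eq, hn]
  rw [hn] at hne
  generalize hD : 2 * ((d₁ : ℝ) * (1 - κ₁) + (d₂ : ℝ) * (1 - κ₂)) * Tp * α₂ - (d₂:ℝ)*T₂*β = D at hne ⊢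
  field_simp [hne]
  subst hD
  ring


set_option maxHeartbeats 1000000 in
/-- Theorem 5.8 (2): `S|_{M⁰}` attains its global maximum iff `D = 0`, `b² ≠ 3ac` and
`R_s ≤ d₂T₂/(nT_p) < R_d`. -/
theorem stmt_14 (d₁ d₂ : ℕ) (hd₁ : 0 < d₁) (hd₂ : 0 < d₂)
    (κ₁ κ₂ : ℝ) (hκ₁0 : 0 ≤ κ₁) (hκ₁1 : κ₁ < 1) (hκ₂0 : 0 ≤ κ₂) (hκ₂1 : κ₂ < 1)
    (n : ℝ) (hn : n = 2 * ((d₁ : ℝ) * (1 - κ₁) + (d₂ : ℝ) * (1 - κ₂)))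
    (Tp T₁ T₂ : ℝ) (hTp : 0 < Tp) (hT₁ : 0 < T₁) (hT₂ : 0 < T₂)
    (S F : ℝ × ℝ × ℝ → ℝ)
    (hS : ∀ p, S p = -(1/4) * ((d₁ : ℝ) * (1 - κ₁) * p.2.1 + (d₂ : ℝ) * (1 - κ₂) * p.2.2) / p.1^2
        - n / (2 * p.1) + (1/4) * ((d₁ : ℝ) * κ₁ / p.2.1 + (d₂ : ℝ) * κ₂ / p.2.2))
    (hF : ∀ p, F p = -n * Tp / p.1 + (d₁ : ℝ) * T₁ / p.2.1 + (d₂ : ℝ) * T₂ / p.2.2)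
    (M0 : Set (ℝ × ℝ × ℝ))
    (hM0 : M0 = {p | 0 < p.1 ∧ 0 < p.2.1 ∧ 0 < p.2.2 ∧ F p = 0})
    (a b c d : ℝ)
    (ha : a = n * (d₂ : ℝ) * (1 - κ₂) * Tp)
    (hb : b = (d₁ : ℝ)^2 * (1 - κ₁) * T₁ - (d₂ : ℝ)^2 * (1 - κ₂) * T₂ + 2 * n^2 * Tp
        - n^2 * κ₁ * Tp^2 / T₁)
    (hc : c = -(2 * n * (d₂ : ℝ) * T₂) + 2 * n * (d₂ : ℝ) * κ₁ * Tp * T₂ / T₁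
        - n * (d₂ : ℝ) * κ₂ * Tp)
    (hd : d = -((d₂ : ℝ)^2 * κ₁ * T₂^2 / T₁) + κ₂ * (d₂ : ℝ)^2 * T₂)
    (Disc : ℝ)
    (hDisc : Disc = 18*a*b*c*d - 4*b^3*d + b^2*c^2 - 4*a*c^3 - 27*a^2*d^2)
    (Rd Rs : ℝ)
    (hRd : Rd = (9*a*d - b*c) / (2*(b^2 - 3*a*c)))
    (hRs : Rs = (4*a*b*c - 9*a^2*d - b^3) / (a*(b^2 - 3*a*c))) :
    (∃ p ∈ M0, ∀ q ∈ M0, S q ≤ S p)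
      ↔ (Disc = 0 ∧ b^2 ≠ 3*a*c ∧ Rs ≤ (d₂ : ℝ) * T₂ / (n * Tp)
          ∧ (d₂ : ℝ) * T₂ / (n * Tp) < Rd) := by
  have hd₁' : (0:ℝ) < (d₁:ℝ) := by exact_mod_cast hd₁
  have hd₂' : (0:ℝ) < (d₂:ℝ) := by exact_mod_cast hd₂
  have hκ₁' : (0:ℝ) < 1 - κ₁ := by linarith
  have hκ₂' : (0:ℝ) < 1 - κ₂ := by linarith
  have hn0 : 0 < n := by
    rw [hn]; nlinarith [mul_pos hd₁' hκ₁', mul_pos hd₂' hκ₂']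
  have ha0 : 0 < a := by
    rw [ha]; nlinarith [mul_pos (mul_pos (mul_pos hn0 hd₂') hκ₂') hTp]
  have hnTp : 0 < n * Tp := mul_pos hn0 hTp
  set x0 : ℝ := (d₂:ℝ) * T₂ / (n * Tp) with hx0def
  have hx00 : 0 < x0 := by positivity
  -- value of S on M0 in terms of the cubic
  have hSval : ∀ p ∈ M0, S p = -(p.2.1/(4*(d₁:ℝ)*T₁*p.2.2^2))
      * (a*(p.2.2/p.1)^3 + b*(p.2.2/p.1)^2 + c*(p.2.2/p.1) + d) := by
    intro p hp
    rw [hM0] at hp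
    obtain ⟨h1, h2, h3, h4⟩ := hp
    rw [hF] at h4
    rw [hS]
    exact key_identity d₁ d₂ hd₁ hd₂ κ₁ κ₂ n hn Tp T₁ T₂ hTp hT₁ hT₂ a b c d
      ha hb hc hd p.1 p.2.1 p.2.2 h1 h2 h3 h4
  -- points of M0 have second coordinate ratio above x0
  have hxgt : ∀ p ∈ M0, x0 < p.2.2/p.1 := by
    intro p hp
    rw [hM0] at hp
    obtain ⟨h1, h2, h3, h4⟩ := hp
    rw [hF] at h4
    rw [hx0def, div_lt_div_iff₀ hnTp h1]
    have h1' := ne_of_gt h1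
    have h2' := ne_of_gt h2
    have h3' := ne_of_gt h3
    field_simp at h4
    nlinarith [mul_pos (mul_pos hd₁' hT₁) (mul_pos h1 h3),
      mul_pos (mul_pos hd₂' hT₂) (mul_pos h1 h2), mul_pos h2 h3]
  -- surjectivity of the ratio onto (x0, ∞)
  have hsurj : ∀ x, x0 < x → ∃ p ∈ M0, p.2.2/p.1 = x := by
    intro x hx
    have hxpos : 0 < x := lt_trans hx00 hx
    have hden : 0 < n*Tp*x - (d₂:ℝ)*T₂ := by
      rw [hx0def] at hx
      have := (div_lt_iff₀ hnTp).mp hx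
      nlinarith
    refine ⟨(1, (d₁:ℝ)*T₁*x/(n*Tp*x - (d₂:ℝ)*T₂), x), ?_, by simp⟩
    rw [hM0]
    refine ⟨one_pos, by positivity, hxpos, ?_⟩
    rw [hF]
    have h5 := ne_of_gt hden
    field_simp
    ring
  -- scaling
  have hscale : ∀ p ∈ M0, ∀ l : ℝ, 0 < l →
      (l*p.1, l*p.2.1, l*p.2.2) ∈ M0 ∧ S (l*p.1, l*p.2.1, l*p.2.2) = S p / l := by
    intro p hp l hl
    rw [hM0] at hp
    obtain ⟨h1, h2, h3, h4⟩ := hp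
    have h1' := ne_of_gt h1
    have h2' := ne_of_gt h2
    have h3' := ne_of_gt h3
    have hl' := ne_of_gt hl
    constructor
    · rw [hM0]
      refine ⟨by positivity, by positivity, by positivity, ?_⟩
      rw [hF] at h4 ⊢
      dsimp only
      have : -n * Tp / (l*p.1) + (d₁:ℝ) * T₁ / (l*p.2.1) + (d₂:ℝ) * T₂ / (l*p.2.2)
          = (-n * Tp / p.1 + (d₁:ℝ) * T₁ / p.2.1 + (d₂:ℝ) * T₂ / p.2.2) / l := by
        field_simp
      rw [this, h4, zero_div]
    · rw [hS, hS]
      dsimp only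
      field_simp
  -- step A: max attained iff sup 0 attained
  have hA : (∃ p ∈ M0, ∀ q ∈ M0, S q ≤ S p)
      ↔ ((∀ q ∈ M0, S q ≤ 0) ∧ ∃ p ∈ M0, S p = 0) := by
    constructor
    · rintro ⟨p, hp, hmax⟩
      have h2 := hscale p hp 2 (by norm_num)
      have hhalf := hscale p hp (1/2) (by norm_num)
      have hSp : S p = 0 := by
        rcases lt_trichotomy (S p) 0 with h | h | h
        · have := hmax _ h2.1
          rw [h2.2] at this; linarith
        · exact h
        · have := hmax _ hhalf.1
          rw [hhalf.2] at this; linarith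
      exact ⟨fun q hq => hSp ▸ hmax q hq, p, hp, hSp⟩
    · rintro ⟨hle, p, hp, hSp⟩
      exact ⟨p, hp, fun q hq => le_trans (hle q hq) (le_of_eq hSp.symm)⟩
  have hcubic := cubic_max_iff a b c d x0 Disc Rd Rs ha0 hDisc hRd hRs
  rw [hA, ← hcubic]
  -- step B/C: translate between S on M0 and the cubic on (x0, ∞)
  have hKpos : ∀ p ∈ M0, 0 < p.2.1/(4*(d₁:ℝ)*T₁*p.2.2^2) := by
    intro p hp
    rw [hM0] at hp
    obtain ⟨h1, h2, h3, h4⟩ := hp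
    positivity
  constructor
  · rintro ⟨hle, p, hp, hSp⟩
    constructor
    · intro x hx
      obtain ⟨q, hq, hqx⟩ := hsurj x hx
      have hSq := hle q hq
      rw [hSval q hq, hqx] at hSq
      have hK := hKpos q hq
      by_contra hneg
      push_neg at hneg
      nlinarith [mul_pos hK (neg_pos.mpr hneg)]
    · refine ⟨p.2.2/p.1, hxgt p hp, ?_⟩
      rw [hSval p hp] at hSp
      have hK := hKpos p hp
      have hSp' : (p.2.1/(4*(d₁:ℝ)*T₁*p.2.2^2))
          * (a*(p.2.2/p.1)^3 + b*(p.2.2/p.1)^2 + c*(p.2.2/p.1) + d) = 0 := by linarith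
      rcases mul_eq_zero.mp hSp' with h | h
      · exact absurd h (ne_of_gt hK)
      · exact h
  · rintro ⟨hpos, x, hx, hPx⟩
    constructor
    · intro q hq
      rw [hSval q hq]
      have hK := hKpos q hq
      have hP := hpos _ (hxgt q hq)
      have := mul_nonneg hK.le hP
      linarith
    · obtain ⟨q, hq, hqx⟩ := hsurj x hx
      refine ⟨q, hq, ?_⟩
      rw [hSval q hq, hqx, hPx, mul_zero]
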